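/- Let Π be a finite root system in the dual of a finite-dimensional real inner product space 𝔞, with simple system Σ, positive system Π⁺, open fundamental Weyl chamber 𝔞⁺ = {H ∈ 𝔞 : α(H) > 0 for all α ∈ Σ}, and Weyl group W. For Θ ⊆ Σ let ⟨Θ⟩ = Π ∩ span_ℝ(Θ) and let W_Θ ⊆ W be the subgroup generated by the reflections s_α with α ∈ Θ. Then {H ∈ 𝔞 : α(H) ≥ 0 for all α ∈ Π⁺ \ ⟨Θ⟩} = W_Θ · cl(𝔞⁺), the union of the images of the closed fundamental chamber under the elements of W_Θ. -/

import Mathlib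

open Filter Topology

section

variable {𝔞 : Type*} [NormedAddCommGroup 𝔞] [InnerProductSpace ℝ 𝔞] [FiniteDimensional ℝ 𝔞]

/-- The vector `u ∈ 𝔞` representing the functional `α` via the inner product:
`α x = ⟪u, x⟫` for all `x`. -/
noncomputable def rieszVec (α : 𝔞 →ₗ[ℝ] ℝ) : 𝔞 :=
  (InnerProductSpace.toDual ℝ 𝔞).symm (LinearMap.toContinuousLinearMap α)

/-- The orthogonal reflection of `𝔞` in the hyperplane `ker α`:
`x ↦ x - (2 α x / α u) • u`, where `u` is the Riesz vector of `α`. -/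
noncomputable def rootRefl (α : 𝔞 →ₗ[ℝ] ℝ) : Module.End ℝ 𝔞 :=
  LinearMap.id - (2 / α (rieszVec α)) • (α.smulRight (rieszVec α))

/-- `RS` bundles the data of a finite (possibly non-reduced) root system
`rts ⊆ 𝔞* \ {0}`, stable under the (duals of the) root reflections, together
with a positive system `pos` coming from a simple system `sim`. -/
structure IsRootSystemWithBase (rts pos : Set (𝔞 →ₗ[ℝ] ℝ)) (sim : Finset (𝔞 →ₗ[ℝ] ℝ)) : Prop where
  finite : rts.Finite
  ne_zero : (0 : 𝔞 →ₗ[ℝ] ℝ) ∉ rts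
  refl_mem : ∀ α ∈ rts, ∀ β ∈ rts, β ∘ₗ (rootRefl α : 𝔞 →ₗ[ℝ] 𝔞) ∈ rts
  sim_subset : ↑sim ⊆ pos
  pos_subset : pos ⊆ rts
  union : rts = pos ∪ (fun β => -β) '' pos
  disjoint : Disjoint pos ((fun β => -β) '' pos)
  pos_comb : ∀ β ∈ pos, ∃ c : (𝔞 →ₗ[ℝ] ℝ) → ℝ,
    (∀ α ∈ sim, 0 ≤ c α) ∧ β = ∑ α ∈ sim, c α • α
  indep : LinearIndependent ℝ (fun α : sim => (α : 𝔞 →ₗ[ℝ] ℝ))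

/-- The open fundamental Weyl chamber determined by the simple system `sim`. -/
def weylChamber (sim : Finset (𝔞 →ₗ[ℝ] ℝ)) : Set 𝔞 :=
  {H : 𝔞 | ∀ α ∈ sim, 0 < α H}

/-- `⟨Θ⟩ = Π ∩ span ℝ Θ`, the roots lying in the span of `Θ`. -/
def rootsSpannedBy (rts : Set (𝔞 →ₗ[ℝ] ℝ)) (Θ : Finset (𝔞 →ₗ[ℝ] ℝ)) : Set (𝔞 →ₗ[ℝ] ℝ) :=
  rts ∩ (Submodule.span ℝ (↑Θ : Set (𝔞 →ₗ[ℝ] ℝ)) : Set (𝔞 →ₗ[ℝ] ℝ))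

/-- The subgroup `W_Θ` of the Weyl group generated by the reflections `s_α`,
`α ∈ Θ` (as a submonoid of `End 𝔞`; since the reflections are involutions this
has the same elements as the generated group). -/
noncomputable def weylSubmonoid (Θ : Set (𝔞 →ₗ[ℝ] ℝ)) : Submonoid (Module.End ℝ 𝔞) :=
  Submonoid.closure (rootRefl '' Θ)


/-! ### Auxiliary lemmas -/

open scoped RealInnerProductSpace

lemma rieszVec_apply (α : 𝔞 →ₗ[ℝ] ℝ) (x : 𝔞) : α x = ⟪rieszVec α, x⟫ := by
  have : (LinearMap.toContinuousLinearMap α) x = (InnerProductSpace.toDual ℝ 𝔞 (rieszVec α)) x := by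
    rw [rieszVec, (InnerProductSpace.toDual ℝ 𝔞).apply_symm_apply]
  simpa [InnerProductSpace.toDual_apply_apply] using this.symm ▸ rfl

lemma rieszVec_self_pos {α : 𝔞 →ₗ[ℝ] ℝ} (hα : α ≠ 0) : 0 < α (rieszVec α) := by
  rw [rieszVec_apply, real_inner_self_eq_norm_sq]
  have hu : rieszVec α ≠ 0 := by
    intro h
    apply hα
    ext x
    rw [rieszVec_apply, h, inner_zero_left]
    rfl
  exact pow_pos (norm_pos_iff.mpr hu) 2

lemma rootRefl_apply (α : 𝔞 →ₗ[ℝ] ℝ) (x : 𝔞) :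
    rootRefl α x = x - (2 / α (rieszVec α)) • (α x • rieszVec α) := rfl

lemma comp_rootRefl (α β : 𝔞 →ₗ[ℝ] ℝ) :
    β ∘ₗ (rootRefl α : 𝔞 →ₗ[ℝ] 𝔞)
      = β - (2 * β (rieszVec α) / α (rieszVec α)) • α := by
  ext x
  simp [rootRefl_apply, LinearMap.sub_apply, LinearMap.smul_apply, smul_eq_mul]
  ring

lemma self_comp_rootRefl {α : 𝔞 →ₗ[ℝ] ℝ} (hα : α ≠ 0) :
    α ∘ₗ (rootRefl α : 𝔞 →ₗ[ℝ] 𝔞) = -α := by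
  have hk : α (rieszVec α) ≠ 0 := (rieszVec_self_pos hα).ne'
  rw [comp_rootRefl]
  rw [show (2 : ℝ) * α (rieszVec α) / α (rieszVec α) = 2 by field_simp]
  ext x; simp; ring

lemma rootRefl_invol {α : 𝔞 →ₗ[ℝ] ℝ} (hα : α ≠ 0) (x : 𝔞) :
    rootRefl α (rootRefl α x) = x := by
  have hax : α (rootRefl α x) = -α x := by
    have := congrArg (fun f : 𝔞 →ₗ[ℝ] ℝ => f x) (self_comp_rootRefl hα)
    simpa using this
  rw [rootRefl_apply α (rootRefl α x), hax, rootRefl_apply]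
  rw [neg_smul, smul_neg, sub_neg_eq_add, sub_add_cancel]

lemma comp_rootRefl_comp_rootRefl {α β : 𝔞 →ₗ[ℝ] ℝ} (hα : α ≠ 0) :
    (β ∘ₗ (rootRefl α : 𝔞 →ₗ[ℝ] 𝔞)) ∘ₗ (rootRefl α : 𝔞 →ₗ[ℝ] 𝔞) = β := by
  ext x
  simp [LinearMap.comp_apply, rootRefl_invol hα x]

variable {rts pos : Set (𝔞 →ₗ[ℝ] ℝ)} {sim Θ : Finset (𝔞 →ₗ[ℝ] ℝ)}

section RS
variable (hRS : IsRootSystemWithBase rts pos sim)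
include hRS

lemma coeff_eq_zero (e : (𝔞 →ₗ[ℝ] ℝ) → ℝ)
    (h : ∑ α ∈ sim, e α • α = 0) : ∀ α ∈ sim, e α = 0 := by
  intro α hα
  exact linearIndependent_iff'.mp hRS.indep Finset.univ (fun i => e i)
    (by rw [← h, ← Finset.sum_coe_sort sim (fun α => e α • α)]) ⟨α, hα⟩ (Finset.mem_univ _)

lemma coeff_unique (c d : (𝔞 →ₗ[ℝ] ℝ) → ℝ)
    (h : ∑ α ∈ sim, c α • α = ∑ α ∈ sim, d α • α) : ∀ α ∈ sim, c α = d α := by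
  intro α hα
  have h0 := coeff_eq_zero hRS (fun γ => c γ - d γ) (by
    rw [← sub_eq_zero] at h; rw [← h, ← Finset.sum_sub_distrib]
    exact Finset.sum_congr rfl fun γ _ => sub_smul (c γ) (d γ) γ) α hα
  linarith

lemma pos_ne_zero {β : 𝔞 →ₗ[ℝ] ℝ} (hβ : β ∈ pos) : β ≠ 0 := by
  intro h
  exact hRS.ne_zero (h ▸ hRS.pos_subset hβ)

lemma neg_not_pos {β : 𝔞 →ₗ[ℝ] ℝ} (hβ : β ∈ pos) : -β ∉ pos := by
  intro h
  exact Set.disjoint_left.mp hRS.disjoint h ⟨β, hβ, rfl⟩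

/-- A root with some strictly positive coefficient in the simple basis is positive. -/
lemma pos_of_coeff_pos {β : 𝔞 →ₗ[ℝ] ℝ} (hβ : β ∈ rts) (c : (𝔞 →ₗ[ℝ] ℝ) → ℝ)
    (hc : β = ∑ α ∈ sim, c α • α) {γ₀ : 𝔞 →ₗ[ℝ] ℝ} (hγ₀ : γ₀ ∈ sim) (hpos : 0 < c γ₀) :
    β ∈ pos := by
  rcases (hRS.union ▸ hβ) with h | ⟨δ, hδ, hβδ⟩
  · exact h
  · exfalso
    obtain ⟨d, hd, hδeq⟩ := hRS.pos_comb δ hδ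
    have hsum : ∑ α ∈ sim, (c α + d α) • α = 0 := by
      simp only [add_smul, Finset.sum_add_distrib, ← hc, ← hδeq]
      rw [← hβδ]; simp
    have := coeff_eq_zero hRS _ hsum γ₀ hγ₀
    have := hd γ₀ hγ₀
    linarith

/-- Coefficients outside `Θ` vanish for roots in the span of `Θ`. -/
lemma coeff_zero_of_mem_span (hΘ : Θ ⊆ sim) {β : 𝔞 →ₗ[ℝ] ℝ}
    (hβ : β ∈ Submodule.span ℝ (↑Θ : Set (𝔞 →ₗ[ℝ] ℝ))) (c : (𝔞 →ₗ[ℝ] ℝ) → ℝ)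
    (hc : β = ∑ α ∈ sim, c α • α) : ∀ γ ∈ sim, γ ∉ Θ → c γ = 0 := by
  classical
  obtain ⟨f, -, hf⟩ := Submodule.mem_span_finset.mp hβ
  set d : (𝔞 →ₗ[ℝ] ℝ) → ℝ := fun γ => if γ ∈ Θ then f γ else 0 with hdd
  have hsum : ∑ α ∈ sim, c α • α = ∑ α ∈ sim, d α • α := by
    rw [← hc, ← Finset.sum_subset hΘ (fun γ _ hγ => by simp [hdd, hγ]), ← hf]
    exact Finset.sum_congr rfl (fun γ hγ => by simp [hdd, hγ])
  intro γ hγsim hγΘ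
  have := coeff_unique hRS c d hsum γ hγsim
  simpa [hdd, hγΘ] using this

lemma mem_span_of_coeff (hΘ : Θ ⊆ sim) (c : (𝔞 →ₗ[ℝ] ℝ) → ℝ)
    (h0 : ∀ γ ∈ sim, γ ∉ Θ → c γ = 0) :
    (∑ α ∈ sim, c α • α) ∈ Submodule.span ℝ (↑Θ : Set (𝔞 →ₗ[ℝ] ℝ)) := by
  rw [← Finset.sum_subset hΘ (fun γ hγ hγΘ => by rw [h0 γ hγ hγΘ, zero_smul])]
  exact Submodule.sum_mem _ fun γ hγ =>
    Submodule.smul_mem _ _ (Submodule.subset_span hγ)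

/-- A positive root that is a scalar multiple of a simple root has positive coefficient. -/
lemma smul_coeff_pos {α β : 𝔞 →ₗ[ℝ] ℝ} (hα : α ∈ sim) (hβ : β ∈ pos) {t : ℝ}
    (ht : β = t • α) : 0 < t := by
  classical
  obtain ⟨c, hc, hceq⟩ := hRS.pos_comb β hβ
  have ht' : β = ∑ γ ∈ sim, (if γ = α then t else 0) • γ := by
    rw [Finset.sum_eq_single_of_mem α hα (fun γ _ hγ => by rw [if_neg hγ, zero_smul]),
      if_pos rfl, ht]
  have hcu := coeff_unique hRS c _ (hceq ▸ ht') α hα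
  rw [if_pos rfl] at hcu
  rcases lt_or_eq_of_le (hc α hα) with h | h
  · rwa [hcu] at h
  · exfalso
    apply pos_ne_zero hRS hβ
    rw [ht, ← hcu, ← h, zero_smul]

/-- Key lemma: reflection in a simple root `α` maps a positive root that is not a
multiple of `α` to a positive root. -/
lemma pos_comp_refl {α β : 𝔞 →ₗ[ℝ] ℝ} (hα : α ∈ sim) (hβ : β ∈ pos)
    (hne : ∀ t : ℝ, β ≠ t • α) : β ∘ₗ (rootRefl α : 𝔞 →ₗ[ℝ] 𝔞) ∈ pos := by
  classical
  have hαrts : α ∈ rts := hRS.pos_subset (hRS.sim_subset hα)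
  have hβrts : β ∈ rts := hRS.pos_subset hβ
  obtain ⟨c, hc, hceq⟩ := hRS.pos_comb β hβ
  set k : ℝ := 2 * β (rieszVec α) / α (rieszVec α) with hk
  -- find γ₀ ≠ α with c γ₀ > 0
  have hγ₀ : ∃ γ₀ ∈ sim, γ₀ ≠ α ∧ 0 < c γ₀ := by
    by_contra h
    push_neg at h
    apply hne (c α)
    rw [hceq]
    rw [Finset.sum_eq_single α (fun γ hγ hγα => by
      have := h γ hγ hγα
      have := hc γ hγ
      have : c γ = 0 := le_antisymm ‹c γ ≤ 0› ‹0 ≤ c γ›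
      rw [this, zero_smul]) (fun h' => absurd hα h')]
  obtain ⟨γ₀, hγ₀sim, hγ₀ne, hγ₀pos⟩ := hγ₀
  have hexp : β ∘ₗ (rootRefl α : 𝔞 →ₗ[ℝ] 𝔞)
      = ∑ γ ∈ sim, (c γ - if γ = α then k else 0) • γ := by
    rw [comp_rootRefl, ← hk]
    have : (k • α : 𝔞 →ₗ[ℝ] ℝ) = ∑ γ ∈ sim, (if γ = α then k else 0) • γ := by
      rw [Finset.sum_eq_single_of_mem α hα (fun γ _ hγ => by rw [if_neg hγ, zero_smul]),
        if_pos rfl]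
    rw [this, hceq]
    rw [← Finset.sum_sub_distrib]
    exact Finset.sum_congr rfl fun γ _ => (sub_smul _ _ _).symm
  exact pos_of_coeff_pos hRS (hRS.refl_mem α hαrts β hβrts) _ hexp hγ₀sim
    (by simpa [hγ₀ne] using hγ₀pos)

/-- Reflections in roots of `Θ` preserve `pos \ span Θ`. -/
lemma pos_comp_refl_theta (hΘ : Θ ⊆ sim) {α β : 𝔞 →ₗ[ℝ] ℝ} (hα : α ∈ Θ) (hβ : β ∈ pos)
    (hβspan : β ∉ Submodule.span ℝ (↑Θ : Set (𝔞 →ₗ[ℝ] ℝ))) :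
    β ∘ₗ (rootRefl α : 𝔞 →ₗ[ℝ] 𝔞) ∈ pos ∧
      β ∘ₗ (rootRefl α : 𝔞 →ₗ[ℝ] 𝔞) ∉ Submodule.span ℝ (↑Θ : Set (𝔞 →ₗ[ℝ] ℝ)) := by
  have hαspan : α ∈ Submodule.span ℝ (↑Θ : Set (𝔞 →ₗ[ℝ] ℝ)) :=
    Submodule.subset_span hα
  have hne : ∀ t : ℝ, β ≠ t • α := by
    intro t ht
    exact hβspan (ht ▸ Submodule.smul_mem _ t hαspan)
  refine ⟨pos_comp_refl hRS (hΘ hα) hβ hne, ?_⟩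
  intro hmem
  apply hβspan
  have : β = (β ∘ₗ (rootRefl α : 𝔞 →ₗ[ℝ] 𝔞))
      + (2 * β (rieszVec α) / α (rieszVec α)) • α := by
    rw [comp_rootRefl]; abel
  rw [this]
  exact Submodule.add_mem _ hmem (Submodule.smul_mem _ _ hαspan)

/-- Elements of `W_Θ` preserve `pos \ span Θ` by right composition. -/
lemma pos_comp_weyl (hΘ : Θ ⊆ sim) {w : Module.End ℝ 𝔞}
    (hw : w ∈ weylSubmonoid (↑Θ : Set (𝔞 →ₗ[ℝ] ℝ))) :
    ∀ β ∈ pos, β ∉ Submodule.span ℝ (↑Θ : Set (𝔞 →ₗ[ℝ] ℝ)) →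
      β ∘ₗ (w : 𝔞 →ₗ[ℝ] 𝔞) ∈ pos ∧
        β ∘ₗ (w : 𝔞 →ₗ[ℝ] 𝔞) ∉ Submodule.span ℝ (↑Θ : Set (𝔞 →ₗ[ℝ] ℝ)) := by
  induction hw using Submonoid.closure_induction with
  | mem x hx =>
    obtain ⟨α, hα, rfl⟩ := hx
    exact fun β hβ hβs => pos_comp_refl_theta hRS hΘ hα hβ hβs
  | one => exact fun β hβ hβs => by simpa using ⟨hβ, hβs⟩
  | mul x y hx hy ihx ihy =>
    intro β hβ hβs
    have h1 := ihx β hβ hβs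
    have h2 := ihy _ h1.1 h1.2
    have : β ∘ₗ ((x * y : Module.End ℝ 𝔞) : 𝔞 →ₗ[ℝ] 𝔞)
        = (β ∘ₗ (x : 𝔞 →ₗ[ℝ] 𝔞)) ∘ₗ (y : 𝔞 →ₗ[ℝ] 𝔞) := rfl
    rw [this]
    exact h2

lemma pos_apply_nonneg {β : 𝔞 →ₗ[ℝ] ℝ} (hβ : β ∈ pos) {H : 𝔞}
    (hH : ∀ γ ∈ sim, 0 ≤ γ H) : 0 ≤ β H := by
  obtain ⟨c, hc, hceq⟩ := hRS.pos_comb β hβ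
  rw [hceq]
  simp only [LinearMap.coe_sum, Finset.sum_apply, LinearMap.smul_apply, smul_eq_mul]
  exact Finset.sum_nonneg fun γ hγ => mul_nonneg (hc γ hγ) (hH γ hγ)

lemma chamber_nonempty : ∃ H₀ : 𝔞, ∀ γ ∈ sim, γ H₀ = 1 := by
  classical
  set f : 𝔞 →ₗ[ℝ] (sim → ℝ) := LinearMap.pi (fun i : sim => (i : 𝔞 →ₗ[ℝ] ℝ)) with hf
  set e : sim → (sim → ℝ) := fun i j => if i = j then 1 else 0 with he
  have key : ∀ χ : Module.Dual ℝ (sim → ℝ), f.dualMap χ = 0 → χ = 0 := by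
    intro χ hχ
    have hrep : ∀ v : sim → ℝ, χ v = ∑ i : sim, v i * χ (e i) := by
      intro v
      conv_lhs => rw [pi_eq_sum_univ v]
      rw [map_sum]
      exact Finset.sum_congr rfl fun i _ => by rw [map_smul, smul_eq_mul, he]
    have hzero : ∑ i : sim, χ (e i) • ((i : 𝔞 →ₗ[ℝ] ℝ)) = 0 := by
      refine LinearMap.ext fun x => ?_
      have h1 := congrArg (fun ρ : Module.Dual ℝ 𝔞 => ρ x) hχ
      simp only [LinearMap.dualMap_apply, LinearMap.zero_apply] at h1
      rw [hrep (f x)] at h1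
      simp only [LinearMap.coe_sum, Finset.sum_apply, LinearMap.smul_apply, smul_eq_mul,
        LinearMap.zero_apply]
      rw [← h1]
      exact Finset.sum_congr rfl fun i _ => by rw [mul_comm]; rfl
    have hg : ∀ i : sim, χ (e i) = 0 := fun i =>
      linearIndependent_iff'.mp hRS.indep Finset.univ _ hzero i (Finset.mem_univ _)
    refine LinearMap.ext fun v => ?_
    rw [hrep v]
    simp [hg]
  have hinj : Function.Injective f.dualMap := by
    intro φ ψ h
    have := key (φ - ψ) (by rw [map_sub, h, sub_self])
    exact sub_eq_zero.mp this
  obtain ⟨H₀, hH₀⟩ := LinearMap.dualMap_injective_iff.mp hinj (fun _ => 1)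
  exact ⟨H₀, fun γ hγ => congrFun hH₀ ⟨γ, hγ⟩⟩

lemma closure_chamber_eq :
    closure (weylChamber sim) = {H : 𝔞 | ∀ γ ∈ sim, 0 ≤ γ H} := by
  apply Set.Subset.antisymm
  · apply closure_minimal
    · exact fun H hH γ hγ => (hH γ hγ).le
    · have : {H : 𝔞 | ∀ γ ∈ sim, 0 ≤ γ H} = ⋂ γ ∈ sim, {H | 0 ≤ γ H} := by
        ext H; simp
      rw [this]
      exact isClosed_biInter fun γ _ =>
        isClosed_le continuous_const (LinearMap.continuous_of_finiteDimensional γ)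
  · obtain ⟨H₀, hH₀⟩ := chamber_nonempty hRS
    intro H hH
    have htend : Tendsto (fun t : ℝ => H + t • H₀) (𝓝[>] 0) (𝓝 H) := by
      have : Tendsto (fun t : ℝ => H + t • H₀) (𝓝 0) (𝓝 (H + (0 : ℝ) • H₀)) := by
        exact (continuous_const.add (continuous_id.smul continuous_const)).tendsto 0
      simpa using this.mono_left nhdsWithin_le_nhds
    refine mem_closure_of_tendsto htend ?_
    filter_upwards [self_mem_nhdsWithin] with t ht γ hγ
    simp only [map_add, map_smul, smul_eq_mul, hH₀ γ hγ, mul_one]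
    have := hH γ hγ
    have : (0:ℝ) < t := ht
    linarith [hH γ hγ]

end RS

/-- The set where all positive roots outside `⟨Θ⟩` are nonnegative is the union
of the images of the closed fundamental Weyl chamber under the elements of `W_Θ`. -/
theorem nonneg_cone_eq_weylSubmonoid_image (rts pos : Set (𝔞 →ₗ[ℝ] ℝ))
    (sim Θ : Finset (𝔞 →ₗ[ℝ] ℝ))
    (hRS : IsRootSystemWithBase rts pos sim) (hΘ : Θ ⊆ sim) :
    {H : 𝔞 | ∀ α ∈ pos \ rootsSpannedBy rts Θ, 0 ≤ α H}
      = ⋃ w ∈ weylSubmonoid (↑Θ : Set (𝔞 →ₗ[ℝ] ℝ)), ⇑w '' closure (weylChamber sim) := by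
  classical
  have hCC := closure_chamber_eq hRS
  apply Set.Subset.antisymm
  · -- hard direction
    intro H hH
    simp only [Set.mem_setOf_eq, Set.mem_diff] at hH
    have hH' : ∀ α ∈ pos, α ∉ Submodule.span ℝ (↑Θ : Set (𝔞 →ₗ[ℝ] ℝ)) → 0 ≤ α H := by
      intro α hα hαs
      exact hH α ⟨hα, fun hmem => hαs hmem.2⟩
    clear hH
    set posF := (hRS.finite.subset hRS.pos_subset).toFinset with hposF
    have hmemF : ∀ β, β ∈ posF ↔ β ∈ pos := fun β => Set.Finite.mem_toFinset _
    set T : 𝔞 → Finset (𝔞 →ₗ[ℝ] ℝ) := fun H => posF.filter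
      (fun β => β ∈ Submodule.span ℝ (↑Θ : Set (𝔞 →ₗ[ℝ] ℝ)) ∧ β H < 0) with hT
    suffices main : ∀ n : ℕ, ∀ H : 𝔞, (T H).card ≤ n →
        (∀ α ∈ pos, α ∉ Submodule.span ℝ (↑Θ : Set (𝔞 →ₗ[ℝ] ℝ)) → 0 ≤ α H) →
        H ∈ ⋃ w ∈ weylSubmonoid (↑Θ : Set (𝔞 →ₗ[ℝ] ℝ)), ⇑w '' closure (weylChamber sim) by
      exact main (T H).card H le_rfl hH'
    intro n
    induction n with
    | zero =>
      intro H hcard hH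
      have hTe : T H = ∅ := Finset.card_eq_zero.mp (le_antisymm hcard (Nat.zero_le _))
      have hcl : H ∈ closure (weylChamber sim) := by
        rw [hCC]
        intro γ hγ
        by_cases hsp : γ ∈ Submodule.span ℝ (↑Θ : Set (𝔞 →ₗ[ℝ] ℝ))
        · by_contra hneg
          push_neg at hneg
          have hmem : γ ∈ T H := by
            rw [hT]
            exact Finset.mem_filter.mpr ⟨(hmemF γ).mpr (hRS.sim_subset hγ), hsp, hneg⟩
          rw [hTe] at hmem
          exact absurd hmem (Finset.notMem_empty γ)
        · exact hH γ (hRS.sim_subset hγ) hsp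
      exact Set.mem_iUnion₂.mpr ⟨1, one_mem _, H, hcl, by simp⟩
    | succ n ih =>
      intro H hcard hH
      by_cases hc : (T H).card ≤ n
      · exact ih H hc hH
      have hne : (T H).Nonempty := by
        rw [← Finset.card_pos]
        omega
      obtain ⟨β, hβT⟩ := hne
      obtain ⟨hβF, hβsp, hβneg⟩ := Finset.mem_filter.mp hβT
      have hβpos : β ∈ pos := (hmemF β).mp hβF
      obtain ⟨c, hc', hceq⟩ := hRS.pos_comb β hβpos
      have hczero := coeff_zero_of_mem_span hRS hΘ hβsp c hceq
      have hβH : ∑ γ ∈ sim, c γ * γ H < 0 := by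
        have h0 := hβneg
        rw [hceq] at h0
        simpa using h0
      have hex : ∃ γ ∈ sim, c γ * γ H < 0 := by
        by_contra hno
        push_neg at hno
        exact absurd (Finset.sum_nonneg fun γ hγ => hno γ hγ) (not_le.mpr hβH)
      obtain ⟨α, hαsim, hαneg⟩ := hex
      have hcα : 0 < c α := by
        rcases eq_or_lt_of_le (hc' α hαsim) with h | h
        · rw [← h, zero_mul] at hαneg
          linarith
        · exact h
      have hαH : α H < 0 :=
        lt_of_not_ge fun h => absurd (mul_nonneg hcα.le h) (not_le.mpr hαneg)
      have hαΘ : α ∈ Θ := by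
        by_contra hnot
        exact absurd (hczero α hαsim hnot) hcα.ne'
      have hαpos : α ∈ pos := hRS.sim_subset hαsim
      have hα0 : α ≠ 0 := pos_ne_zero hRS hαpos
      set H' := rootRefl α H with hH'def
      have hH'hyp : ∀ δ ∈ pos, δ ∉ Submodule.span ℝ (↑Θ : Set (𝔞 →ₗ[ℝ] ℝ)) → 0 ≤ δ H' := by
        intro δ hδ hδs
        obtain ⟨h1, h2⟩ := pos_comp_refl_theta hRS hΘ hαΘ hδ hδs
        exact hH _ h1 h2
      have hαT : α ∈ T H :=
        Finset.mem_filter.mpr ⟨(hmemF α).mpr hαpos, Submodule.subset_span hαΘ, hαH⟩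
      have hαH' : α H' = -α H := by
        have h0 := congrArg (fun f : 𝔞 →ₗ[ℝ] ℝ => f H) (self_comp_rootRefl hα0)
        simpa using h0
      have hmap : ∀ β' ∈ T H', β' ∘ₗ (rootRefl α : 𝔞 →ₗ[ℝ] 𝔞) ∈ (T H).erase α := by
        intro β' hβ'
        obtain ⟨hβ'F, hβ'sp, hβ'neg⟩ := Finset.mem_filter.mp hβ'
        have hβ'pos := (hmemF β').mp hβ'F
        have hβ'ne : ∀ t : ℝ, β' ≠ t • α := by
          intro t ht
          have ht' : 0 < t := smul_coeff_pos hRS hαsim hβ'pos ht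
          have hval : β' H' = t * α H' := by rw [ht]; simp
          rw [hval, hαH'] at hβ'neg
          nlinarith
        refine Finset.mem_erase.mpr ⟨?_, Finset.mem_filter.mpr ⟨?_, ?_, ?_⟩⟩
        · intro h
          have h2 := congrArg (fun f : 𝔞 →ₗ[ℝ] ℝ => f ∘ₗ (rootRefl α : 𝔞 →ₗ[ℝ] 𝔞)) h
          rw [comp_rootRefl_comp_rootRefl hα0, self_comp_rootRefl hα0] at h2
          exact neg_not_pos hRS hαpos (h2 ▸ hβ'pos)
        · exact (hmemF _).mpr (pos_comp_refl hRS hαsim hβ'pos hβ'ne)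
        · rw [comp_rootRefl]
          exact Submodule.sub_mem _ hβ'sp
            (Submodule.smul_mem _ _ (Submodule.subset_span hαΘ))
        · exact hβ'neg
      have hinj : Set.InjOn (fun β' : 𝔞 →ₗ[ℝ] ℝ => β' ∘ₗ (rootRefl α : 𝔞 →ₗ[ℝ] 𝔞)) ↑(T H') := by
        intro x hx y hy hxy
        have h2 := congrArg (fun f : 𝔞 →ₗ[ℝ] ℝ => f ∘ₗ (rootRefl α : 𝔞 →ₗ[ℝ] 𝔞)) hxy
        simp only at h2
        rwa [comp_rootRefl_comp_rootRefl hα0, comp_rootRefl_comp_rootRefl hα0] at h2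
      have hcard' : (T H').card ≤ n := by
        have h1 := Finset.card_image_of_injOn hinj
        have h2 : ((T H').image (fun β' => β' ∘ₗ (rootRefl α : 𝔞 →ₗ[ℝ] 𝔞))) ⊆ (T H).erase α :=
          fun x hx => by
            obtain ⟨b, hb, rfl⟩ := Finset.mem_image.mp hx
            exact hmap b hb
        have h3 := Finset.card_le_card h2
        have h4 := Finset.card_erase_of_mem hαT
        omega
      obtain ⟨w, hw, H₀, hH₀, hwH₀⟩ := Set.mem_iUnion₂.mp (ih H' hcard' hH'hyp)
      refine Set.mem_iUnion₂.mpr ⟨rootRefl α * w,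
        mul_mem (Submonoid.subset_closure ⟨α, hαΘ, rfl⟩) hw, H₀, hH₀, ?_⟩
      rw [Module.End.mul_apply, hwH₀]
      exact rootRefl_invol hα0 H
  · -- easy direction
    intro H hH
    obtain ⟨w, hw, H₀, hH₀, rfl⟩ := Set.mem_iUnion₂.mp hH
    intro α hα
    obtain ⟨hαpos, hαns⟩ := hα
    have hαsp : α ∉ Submodule.span ℝ (↑Θ : Set (𝔞 →ₗ[ℝ] ℝ)) :=
      fun h => hαns ⟨hRS.pos_subset hαpos, h⟩
    obtain ⟨h1, h2⟩ := pos_comp_weyl hRS hΘ hw α hαpos hαsp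
    have hH₀' : ∀ γ ∈ sim, 0 ≤ γ H₀ := by
      rw [hCC] at hH₀
      exact hH₀
    exact pos_apply_nonneg hRS h1 hH₀'

end
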